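/- Let \(W\) be an alternating trail in a signed valence graph (signs alternate along consecutive valencies). If \(W\) traverses both valencies of some edge \(e = xy\) and these valencies have opposite signs and \(W\) traverses them in the same direction (both from \(x\) to \(y\), say), then deleting both occurrences of the valencies of \(e\) from \(W\) (and splicing the remaining fragments) yields an alternating trail with the same endpoints and the same parity of length as \(W\). -/

import Mathlib

/-- Index splice map for the edge sequence. -/
private def regG (i j : ℕ) : ℕ → ℕ := fun k =>
  if k < i then k else if k + 1 < j then i + j - 1 - k else k + 2

/-- Index splice map for the vertex sequence. -/
private def regF (i j : ℕ) : ℕ → ℕ := fun k =>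
  if k < i then k else if k < j then i + j - k else k + 2

private lemma boolchain : ∀ {a b c d : Bool}, a ≠ b → b ≠ c → c ≠ d → a ≠ d := by
  decide

theorem stmt19 {V F : Type*} (ends : F → V × V) (M : F → Bool)
    (n : ℕ) (vs : Fin (n + 1) → V) (es : Fin n → F)
    (hinc : ∀ k : Fin n, ends (es k) = (vs k.castSucc, vs k.succ) ∨
      ends (es k) = (vs k.succ, vs k.castSucc))
    (htrail : Function.Injective es)
    (halt : ∀ k : Fin n, ∀ h : (k : ℕ) + 1 < n, M (es k) ≠ M (es ⟨(k : ℕ) + 1, h⟩))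
    (x y : V) (e₁ e₂ : F) (he₁ : ends e₁ = (x, y)) (he₂ : ends e₂ = (x, y))
    (hne : e₁ ≠ e₂) (hsign : M e₁ ≠ M e₂)
    (i j : Fin n) (hij : (i : ℕ) < (j : ℕ)) (hesi : es i = e₁) (hesj : es j = e₂)
    -- both valencies are traversed in the same direction, from `x` to `y`:
    (hdiri : vs i.castSucc = x ∧ vs i.succ = y)
    (hdirj : vs j.castSucc = x ∧ vs j.succ = y) :
    ∃ (vs' : Fin (n - 2 + 1) → V) (es' : Fin (n - 2) → F),
      (∀ k : Fin (n - 2), ends (es' k) = (vs' k.castSucc, vs' k.succ) ∨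
        ends (es' k) = (vs' k.succ, vs' k.castSucc)) ∧
      Function.Injective es' ∧
      (∀ k : Fin (n - 2), ∀ h : (k : ℕ) + 1 < n - 2,
        M (es' k) ≠ M (es' ⟨(k : ℕ) + 1, h⟩)) ∧
      vs' 0 = vs 0 ∧ vs' (Fin.last (n - 2)) = vs (Fin.last n) ∧
      Set.range es' = Set.range es \ {e₁, e₂} := by
  obtain ⟨hvi1, hvi2⟩ := hdiri
  obtain ⟨hvj1, hvj2⟩ := hdirj
  have hi : (i : ℕ) < n := i.isLt
  have hj : (j : ℕ) < n := j.isLt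
  have hn : 0 < n := by omega
  set vsN : ℕ → V := fun m => vs ⟨min m n, by omega⟩ with hvsN
  set esN : ℕ → F := fun m => es ⟨min m (n - 1), by omega⟩ with hesN
  have hvs : ∀ m (hm : m < n + 1), vsN m = vs ⟨m, hm⟩ := by
    intro m hm
    simp only [hvsN]
    congr 1
    exact Fin.ext (show min m n = m by omega)
  have hes : ∀ m (hm : m < n), esN m = es ⟨m, hm⟩ := by
    intro m hm
    simp only [hesN]
    congr 1
    exact Fin.ext (show min m (n - 1) = m by omega)
  have hvxi : vsN i = x := by rw [hvs i (by omega)]; exact hvi1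
  have hvyi : vsN ((i : ℕ) + 1) = y := by rw [hvs ((i : ℕ) + 1) (by omega)]; exact hvi2
  have hvxj : vsN j = x := by rw [hvs j (by omega)]; exact hvj1
  have hvyj : vsN ((j : ℕ) + 1) = y := by rw [hvs ((j : ℕ) + 1) (by omega)]; exact hvj2
  have hMe1 : esN i = e₁ := by rw [hes i hi, Fin.eta]; exact hesi
  have hMe2 : esN j = e₂ := by rw [hes j hj, Fin.eta]; exact hesj
  have hincN : ∀ m, m < n → ends (esN m) = (vsN m, vsN (m + 1)) ∨
      ends (esN m) = (vsN (m + 1), vsN m) := by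
    intro m hm
    rw [hes m hm, hvs m (by omega), hvs (m + 1) (by omega)]
    exact hinc ⟨m, hm⟩
  have haltN : ∀ m, m + 1 < n → M (esN m) ≠ M (esN (m + 1)) := by
    intro m hm
    rw [hes m (by omega), hes (m + 1) hm]
    exact halt ⟨m, by omega⟩ hm
  have hgprop : ∀ k : ℕ, k < n - 2 →
      regG i j k < n ∧ regG i j k ≠ i ∧ regG i j k ≠ j := by
    intro k hk
    simp only [regG]
    split_ifs <;> omega
  have h0 : vsN 0 = vs 0 := by
    rw [hvs 0 (by omega)]
    congr 1
  have hlast : vsN n = vs (Fin.last n) := by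
    rw [hvs n (by omega)]
    congr 1
  refine ⟨fun k => vsN (regF i j k), fun k => esN (regG i j k),
    ?_, ?_, ?_, ?_, ?_, ?_⟩
  · -- incidence
    intro k
    have hk : (k : ℕ) < n - 2 := k.isLt
    simp only [regF, regG, Fin.coe_castSucc, Fin.val_succ]
    split_ifs
    all_goals first
      | (exfalso; omega)
      | (exact hincN _ (by omega))
      | -- junction k + 1 = i : the new next vertex is vs j = x = vs i
        (rw [show (i : ℕ) + j - ((k : ℕ) + 1) = (j : ℕ) from by omega, hvxj, ← hvxi,
            show (i : ℕ) = (k : ℕ) + 1 from by omega]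
         exact hincN _ (by omega))
      | -- reversed middle segment
        (rw [show (i : ℕ) + j - (k : ℕ) = (i : ℕ) + j - 1 - (k : ℕ) + 1 from by omega,
            show (i : ℕ) + j - ((k : ℕ) + 1) = (i : ℕ) + j - 1 - (k : ℕ) from by omega]
         exact (hincN _ (by omega)).symm)
      | -- junction k = j - 1 : the vertex is vs (i+1) = y = vs (j+1)
        (rw [show (i : ℕ) + j - (k : ℕ) = (i : ℕ) + 1 from by omega, hvyi, ← hvyj,
            show (j : ℕ) + 1 = (k : ℕ) + 2 from by omega,
            show (k : ℕ) + 1 + 2 = (k : ℕ) + 2 + 1 from by omega]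
         exact hincN _ (by omega))
      | -- tail
        (rw [show (k : ℕ) + 1 + 2 = (k : ℕ) + 2 + 1 from by omega]
         exact hincN _ (by omega))
  · -- injectivity
    intro a b hab
    have hab' : esN (regG i j a) = esN (regG i j b) := hab
    obtain ⟨ha1, -, -⟩ := hgprop a a.isLt
    obtain ⟨hb1, -, -⟩ := hgprop b b.isLt
    rw [hes _ ha1, hes _ hb1] at hab'
    have hval : regG i j a = regG i j b := congrArg Fin.val (htrail hab')
    have ha := a.isLt
    have hb := b.isLt
    apply Fin.ext
    simp only [regG] at hval
    split_ifs at hval <;> omega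
  · -- alternation
    intro k hk1
    show M (esN (regG i j (k : ℕ))) ≠ M (esN (regG i j ((k : ℕ) + 1)))
    have hk : (k : ℕ) + 1 < n - 2 := hk1
    simp only [regG]
    split_ifs
    all_goals first
      | (exfalso; omega)
      | (exact haltN _ (by omega))
      | -- junction: k + 1 = i, next edge is es (j-1)
        (have e1 : M (esN (k : ℕ)) ≠ M e₁ := by
           rw [← hMe1, show (i : ℕ) = (k : ℕ) + 1 from by omega]
           exact haltN (k : ℕ) (by omega)
         have e2 : M (esN ((j : ℕ) - 1)) ≠ M e₂ := by
           have := haltN ((j : ℕ) - 1) (by omega)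
           rwa [show (j : ℕ) - 1 + 1 = (j : ℕ) from by omega, hMe2] at this
         rw [show (i : ℕ) + j - 1 - ((k : ℕ) + 1) = (j : ℕ) - 1 from by omega]
         exact boolchain e1 hsign e2.symm)
      | -- junction: k + 1 = i and j = k + 2 (empty middle), next edge is es (j+1)
        (have e1 : M (esN (k : ℕ)) ≠ M e₁ := by
           rw [← hMe1, show (i : ℕ) = (k : ℕ) + 1 from by omega]
           exact haltN (k : ℕ) (by omega)
         have e3 : M e₂ ≠ M (esN ((j : ℕ) + 1)) := by
           have := haltN (j : ℕ) (by omega)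
           rwa [hMe2] at this
         rw [show (k : ℕ) + 1 + 2 = (j : ℕ) + 1 from by omega]
         exact boolchain e1 hsign e3)
      | -- reversed middle
        (have := haltN ((i : ℕ) + j - 1 - ((k : ℕ) + 1)) (by omega)
         rw [show (i : ℕ) + j - 1 - ((k : ℕ) + 1) + 1 = (i : ℕ) + j - 1 - (k : ℕ)
           from by omega] at this
         exact this.symm)
      | -- junction: k = j - 2, edges es (i+1) and es (j+1)
        (rw [show (i : ℕ) + j - 1 - (k : ℕ) = (i : ℕ) + 1 from by omega,
           show (k : ℕ) + 1 + 2 = (j : ℕ) + 1 from by omega]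
         have e1 : M e₁ ≠ M (esN ((i : ℕ) + 1)) := by
           have := haltN (i : ℕ) (by omega)
           rwa [hMe1] at this
         have e3 : M e₂ ≠ M (esN ((j : ℕ) + 1)) := by
           have := haltN (j : ℕ) (by omega)
           rwa [hMe2] at this
         exact boolchain e1.symm hsign e3)
      | -- tail
        (rw [show (k : ℕ) + 1 + 2 = (k : ℕ) + 2 + 1 from by omega]
         exact haltN _ (by omega))
  · -- first vertex
    show vsN (regF i j ((0 : Fin (n - 2 + 1)) : ℕ)) = vs 0
    rw [Fin.val_zero]
    simp only [regF]
    split_ifs with h1 h2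
    · exact h0
    · rw [show (i : ℕ) + j - 0 = (j : ℕ) from by omega, hvxj, ← hvxi,
        show (i : ℕ) = 0 from by omega]
      exact h0
    · exfalso; omega
  · -- last vertex
    show vsN (regF i j ((Fin.last (n - 2)) : ℕ)) = vs (Fin.last n)
    simp only [regF, Fin.val_last]
    split_ifs with h1 h2
    · exfalso; omega
    · rw [show (i : ℕ) + j - (n - 2) = (i : ℕ) + 1 from by omega, hvyi, ← hvyj,
        show (j : ℕ) + 1 = n from by omega]
      exact hlast
    · rw [show n - 2 + 2 = n from by omega]
      exact hlast
  · -- range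
    ext c
    simp only [Set.mem_range, Set.mem_diff, Set.mem_insert_iff,
      Set.mem_singleton_iff, not_or]
    constructor
    · rintro ⟨k, rfl⟩
      obtain ⟨h1, h2, h3⟩ := hgprop k k.isLt
      refine ⟨⟨⟨regG i j k, h1⟩, (hes _ h1).symm⟩, ?_, ?_⟩
      · rw [hes _ h1, ← hesi]
        intro hcon
        exact h2 (congrArg Fin.val (htrail hcon))
      · rw [hes _ h1, ← hesj]
        intro hcon
        exact h3 (congrArg Fin.val (htrail hcon))
    · rintro ⟨⟨m, rfl⟩, hc1, hc2⟩
      have hm : (m : ℕ) < n := m.isLt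
      have hmi : (m : ℕ) ≠ i := by
        intro h
        exact hc1 (by rw [← hesi]; exact congrArg es (Fin.ext h))
      have hmj : (m : ℕ) ≠ j := by
        intro h
        exact hc2 (by rw [← hesj]; exact congrArg es (Fin.ext h))
      refine ⟨⟨if (m : ℕ) < i then (m : ℕ)
          else if (m : ℕ) < j then (i : ℕ) + j - 1 - m else (m : ℕ) - 2, ?_⟩, ?_⟩
      · split_ifs <;> omega
      · show esN (regG i j _) = es m
        have hval : regG i j (if (m : ℕ) < i then (m : ℕ)
            else if (m : ℕ) < j then (i : ℕ) + j - 1 - m else (m : ℕ) - 2) = m := by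
          simp only [regG]
          split_ifs <;> omega
        rw [hval, hes m hm, Fin.eta]
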